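/- Under the assumptions of the main theorem (i.i.d. X_i with F̄ regularly varying of index -α, α > 0, density f eventually non-increasing, a_n = F^{←}(1-1/n), Z_n = (X_{(n)}/a_n)^{α/log n} with density g_n), for every M > 1, (1/log n) log g_n(x) → -log x uniformly for x ∈ [1, M] as n → ∞. -/

import Mathlib

open Filter

section Aux
open Real

lemma auxC (ψ : ℝ → ℝ) (hψ : Antitone ψ) (c A : ℝ) (hc : 0 < c) (hA : 0 < A)
    (h : Tendsto (fun u => ψ (u + c) - ψ u) atTop (nhds (-A))) :
    Tendsto (fun u => ψ u / u) atTop (nhds (-(A / c))) := by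
  have hbase : ∀ (u₀ p s m : ℝ),
      Tendsto (fun u : ℝ => (p + ((u - u₀)/c + s) * m)/u) atTop (nhds (m/c)) := by
    intro u₀ p s m
    have heq : ∀ᶠ u : ℝ in atTop,
        p/u + (m/c)*(1 - u₀/u) + s*m/u = (p + ((u - u₀)/c + s) * m)/u := by
      filter_upwards [eventually_gt_atTop (0:ℝ)] with u hu
      field_simp
      ring
    have h1 : Tendsto (fun u : ℝ => p/u) atTop (nhds 0) :=
      tendsto_const_nhds.div_atTop tendsto_id
    have h2 : Tendsto (fun u : ℝ => (m/c)*(1 - u₀/u)) atTop (nhds ((m/c)*(1-0))) :=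
      tendsto_const_nhds.mul (tendsto_const_nhds.sub (tendsto_const_nhds.div_atTop tendsto_id))
    have h3 : Tendsto (fun u : ℝ => s*m/u) atTop (nhds 0) :=
      tendsto_const_nhds.div_atTop tendsto_id
    have := (h1.add h2).add h3
    rw [tendsto_congr' heq] at this
    simpa using this
  rw [Metric.tendsto_atTop]
  intro ε hε
  set δ : ℝ := min (A/2) (c*ε/4) with hδdef
  have hδpos : 0 < δ := lt_min (by linarith) (by positivity)
  have hδA : δ < A := lt_of_le_of_lt (min_le_left _ _) (by linarith)
  have hδε : 2*δ/c ≤ ε/2 := by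
    have h1 : δ ≤ c*ε/4 := min_le_right _ _
    rw [div_le_div_iff₀ hc (by norm_num : (0:ℝ) < 2)]
    nlinarith
  obtain ⟨N, hN⟩ := Metric.tendsto_atTop.mp h δ hδpos
  set u₀ : ℝ := max N 0 with hu₀def
  have hstep : ∀ u ≥ u₀, -A - δ ≤ ψ (u + c) - ψ u ∧ ψ (u + c) - ψ u ≤ -A + δ := by
    intro u hu
    have := hN u (le_trans (le_max_left _ _) hu)
    rw [Real.dist_eq, abs_lt] at this
    constructor <;> linarith [this.1, this.2]
  have hind : ∀ k : ℕ, ψ u₀ + k*(-A-δ) ≤ ψ (u₀ + k*c) ∧ ψ (u₀ + k*c) ≤ ψ u₀ + k*(-A+δ) := by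
    intro k
    induction k with
    | zero => simp
    | succ k ih =>
      have hk : u₀ + (k:ℝ)*c ≥ u₀ := by
        have : 0 ≤ (k:ℝ)*c := by positivity
        linarith
      have := hstep _ hk
      have he : u₀ + ((k:ℝ)+1)*c = (u₀ + (k:ℝ)*c) + c := by ring
      push_cast
      rw [he]
      constructor <;> nlinarith [ih.1, ih.2, this.1, this.2]
  -- pointwise sandwich for u ≥ u₀
  have hsand : ∀ u ≥ u₀,
      ψ u₀ + ((u - u₀)/c + 1)*(-A-δ) ≤ ψ u ∧
      ψ u ≤ ψ u₀ + ((u - u₀)/c + (-1))*(-A+δ) := by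
    intro u hu
    set k : ℕ := ⌊(u - u₀)/c⌋₊ with hkdef
    have hnn : 0 ≤ (u - u₀)/c := div_nonneg (by linarith) hc.le
    have hk1 : (k:ℝ) ≤ (u - u₀)/c := Nat.floor_le hnn
    have hk2 : (u - u₀)/c < (k:ℝ) + 1 := Nat.lt_floor_add_one _
    have hu1 : u₀ + (k:ℝ)*c ≤ u := by
      have := (le_div_iff₀ hc).mp hk1
      linarith
    have hu2 : u ≤ u₀ + ((k:ℝ)+1)*c := by
      have := (div_lt_iff₀ hc).mp hk2
      nlinarith
    constructor
    · have h1 : ψ (u₀ + ((k:ℝ)+1)*c) ≤ ψ u := hψ hu2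
      have h2 := (hind (k+1)).1
      push_cast at h2
      have h3 : ((u - u₀)/c + 1)*(-A-δ) ≤ ((k:ℝ)+1)*(-A-δ) := by
        apply mul_le_mul_of_nonpos_right _ (by linarith)
        linarith
      linarith
    · have h1 : ψ u ≤ ψ (u₀ + (k:ℝ)*c) := hψ hu1
      have h2 := (hind k).2
      have h3 : (k:ℝ)*(-A+δ) ≤ ((u - u₀)/c + (-1))*(-A+δ) := by
        apply mul_le_mul_of_nonpos_right _ (by linarith)
        linarith
      linarith
  -- limits of bounding functions
  have hHi := hbase u₀ (ψ u₀) (-1) (-A+δ)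
  have hLo := hbase u₀ (ψ u₀) 1 (-A-δ)
  have hHi' : ∀ᶠ u : ℝ in atTop,
      (ψ u₀ + ((u - u₀)/c + (-1)) * (-A+δ))/u < (-A+δ)/c + δ/c :=
    hHi.eventually_lt_const (by have := div_pos hδpos hc; linarith)
  have hLo' : ∀ᶠ u : ℝ in atTop,
      (-A-δ)/c - δ/c < (ψ u₀ + ((u - u₀)/c + 1) * (-A-δ))/u :=
    hLo.eventually_const_lt (by have := div_pos hδpos hc; linarith)
  have hev : ∀ᶠ u : ℝ in atTop, dist (ψ u / u) (-(A/c)) < ε := by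
    filter_upwards [hHi', hLo', eventually_ge_atTop u₀, eventually_gt_atTop (0:ℝ)]
      with u h1 h2 h3 h4
    obtain ⟨hs1, hs2⟩ := hsand u h3
    have b1 : ψ u / u ≤ (ψ u₀ + ((u - u₀)/c + (-1)) * (-A+δ))/u :=
      (div_le_div_iff_of_pos_right h4).mpr hs2
    have b2 : (ψ u₀ + ((u - u₀)/c + 1) * (-A-δ))/u ≤ ψ u / u :=
      (div_le_div_iff_of_pos_right h4).mpr hs1
    rw [Real.dist_eq, abs_lt]
    have e1 : (-A+δ)/c + δ/c = -(A/c) + 2*δ/c := by ring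
    have e2 : (-A-δ)/c - δ/c = -(A/c) - 2*δ/c := by ring
    constructor
    · nlinarith [hδε, b2, h2]
    · nlinarith [hδε, b1, h1]
  rw [eventually_atTop] at hev
  obtain ⟨N', hN'⟩ := hev
  exact ⟨N', hN'⟩

lemma auxD (U : ℝ → ℝ) (α : ℝ) (hα : 0 < α) (hU_anti : Antitone U)
    (hU_pos : ∀ x > (0:ℝ), 0 < U x)
    (hU2 : Tendsto (fun x => U (2*x)/U x) atTop (nhds ((2:ℝ)^(-α)))) :
    Tendsto (fun x => Real.log (U x) / Real.log x) atTop (nhds (-α)) := by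
  set ψ : ℝ → ℝ := fun u => Real.log (U (Real.exp u)) with hψdef
  have hψanti : Antitone ψ := by
    intro u v huv
    exact Real.log_le_log (hU_pos _ (Real.exp_pos _))
      (hU_anti (Real.exp_le_exp.mpr huv))
  have hrp : (0:ℝ) < (2:ℝ)^(-α) := Real.rpow_pos_of_pos two_pos _
  have hdiff : Tendsto (fun u => ψ (u + Real.log 2) - ψ u) atTop (nhds (-(α * Real.log 2))) := by
    have h1 : Tendsto (fun u : ℝ => U (2 * Real.exp u) / U (Real.exp u)) atTop
        (nhds ((2:ℝ)^(-α))) := hU2.comp Real.tendsto_exp_atTop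
    have h2 : Tendsto (fun u : ℝ => Real.log (U (2 * Real.exp u) / U (Real.exp u))) atTop
        (nhds (Real.log ((2:ℝ)^(-α)))) :=
      ((Real.continuousAt_log (ne_of_gt hrp)).tendsto).comp h1
    have h3 : Real.log ((2:ℝ)^(-α)) = -(α * Real.log 2) := by
      rw [Real.log_rpow two_pos]; ring
    rw [h3] at h2
    apply h2.congr
    intro u
    rw [hψdef]
    simp only
    rw [Real.exp_add, Real.exp_log two_pos, Real.log_div
      (ne_of_gt (hU_pos _ (by positivity))) (ne_of_gt (hU_pos _ (Real.exp_pos _)))]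
    ring_nf
  have hlog2 : (0:ℝ) < Real.log 2 := Real.log_pos one_lt_two
  have hC := auxC ψ hψanti (Real.log 2) (α * Real.log 2) hlog2 (by positivity) hdiff
  have hval : -(α * Real.log 2 / Real.log 2) = -α := by field_simp
  rw [hval] at hC
  have := hC.comp Real.tendsto_log_atTop
  apply this.congr'
  filter_upwards [eventually_gt_atTop (0:ℝ)] with x hx
  simp only [Function.comp, hψdef, Real.exp_log hx]

end Aux

set_option maxHeartbeats 1000000 in
theorem stmt_14 (F L f : ℝ → ℝ) (α M : ℝ) (hα : 0 < α) (hM : 1 < M)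
    (hF_mono : Monotone F) (hF0 : ∀ x, 0 ≤ F x) (hF1 : ∀ x, F x ≤ 1)
    (hL_pos : ∀ x > (0 : ℝ), 0 < L x)
    (hL_slow : ∀ t > (0 : ℝ), Tendsto (fun x => L (t * x) / L x) atTop (nhds 1))
    (hFbar : ∀ x > (0 : ℝ), 1 - F x = x ^ (-α) * L x)
    (hf : ∀ x, HasDerivAt F (f x) x)
    (hf_mono : ∃ x₁ : ℝ, AntitoneOn f (Set.Ici x₁))
    (a : ℕ → ℝ) (ha : ∀ n, a n = sInf {x : ℝ | 1 - 1 / (n : ℝ) ≤ F x})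
    -- g n is the density of Z_n = (X_{(n)}/a_n)^{α/log n}
    (g : ℕ → ℝ → ℝ)
    (hg : ∀ n : ℕ, ∀ x ≥ (1 : ℝ),
      g n x = (n : ℝ) * a n * (Real.log n / α) * x ^ (Real.log n / α - 1)
        * F (a n * x ^ (Real.log n / α)) ^ (n - 1)
        * f (a n * x ^ (Real.log n / α))) :
    TendstoUniformlyOn (fun (n : ℕ) (x : ℝ) => Real.log (g n x) / Real.log n)
      (fun x => -Real.log x) atTop (Set.Icc 1 M) := by
  set U : ℝ → ℝ := fun x => 1 - F x with hUdef
  have hU_anti : Antitone U := fun x y hxy => by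
    simp only [hUdef]; linarith [hF_mono hxy]
  have hU_pos : ∀ x > (0:ℝ), 0 < U x := by
    intro x hx
    simp only [hUdef]
    rw [hFbar x hx]
    exact mul_pos (Real.rpow_pos_of_pos hx _) (hL_pos x hx)
  have hU_nonneg : ∀ x, 0 ≤ U x := fun x => by simp only [hUdef]; linarith [hF1 x]
  have hF_cont : Continuous F := by
    rw [continuous_iff_continuousAt]; exact fun x => (hf x).continuousAt
  have hU2 : Tendsto (fun x => U (2*x)/U x) atTop (nhds ((2:ℝ)^(-α))) := by
    have h1 : Tendsto (fun x => (2:ℝ)^(-α) * (L (2*x) / L x)) atTop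
        (nhds ((2:ℝ)^(-α) * 1)) := tendsto_const_nhds.mul (hL_slow 2 two_pos)
    rw [mul_one] at h1
    apply h1.congr'
    filter_upwards [eventually_gt_atTop (0:ℝ)] with x hx
    have h2x : (0:ℝ) < 2*x := by positivity
    simp only [hUdef]
    rw [hFbar x hx, hFbar _ h2x, Real.mul_rpow (by norm_num) hx.le]
    have hx1 : (x:ℝ) ^ (-α) ≠ 0 := (Real.rpow_pos_of_pos hx _).ne'
    have hx2 : L x ≠ 0 := (hL_pos x hx).ne'
    field_simp
  have hUlog : Tendsto (fun x => Real.log (U x) / Real.log x) atTop (nhds (-α)) :=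
    auxD U α hα hU_anti hU_pos hU2
  -- U tends to 0 at top
  have hUtop : Tendsto U atTop (nhds 0) := by
    have h1 : ∀ᶠ x : ℝ in atTop, Real.log (U x) ≤ (-α/2) * Real.log x := by
      filter_upwards [hUlog.eventually_lt_const (by linarith : -α < -α/2),
        eventually_gt_atTop (1:ℝ)] with x hx hx1
      have hlx : 0 < Real.log x := Real.log_pos hx1
      rw [div_lt_iff₀ hlx] at hx
      linarith
    have h2 : Tendsto (fun x : ℝ => (-α/2) * Real.log x) atTop atBot := by
      apply Tendsto.const_mul_atTop_of_neg (by linarith) Real.tendsto_log_atTop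
    have h3 : Tendsto (fun x => Real.log (U x)) atTop atBot :=
      tendsto_atBot_mono' _ h1 h2
    have h4 := Real.tendsto_exp_atBot.comp h3
    apply h4.congr'
    filter_upwards [eventually_gt_atTop (0:ℝ)] with x hx
    simp only [Function.comp]
    exact Real.exp_log (hU_pos x hx)
  have hFtop : Tendsto F atTop (nhds 1) := by
    have h1 : Tendsto (fun x => 1 - U x) atTop (nhds (1 - 0)) :=
      tendsto_const_nhds.sub hUtop
    rw [sub_zero] at h1
    apply h1.congr
    intro x
    simp only [hUdef]
    ring
  have hFlt1 : ∀ x, F x < 1 := by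
    intro x
    calc F x ≤ F (max x 1) := hF_mono (le_max_left _ _)
    _ < 1 := by
        have := hU_pos (max x 1) (by positivity)
        simp only [hUdef] at this; linarith
  -- a_n facts
  have hA_ev : ∀ᶠ n : ℕ in atTop, 1 ≤ a n ∧ U (a n) = 1/(n:ℝ) := by
    have hU1 : 0 < U 1 := hU_pos 1 one_pos
    filter_upwards [eventually_ge_atTop 2,
      tendsto_one_div_atTop_nhds_zero_nat.eventually_lt_const hU1] with n hn2 hnU
    have hn0 : (2:ℝ) ≤ (n:ℝ) := by exact_mod_cast hn2
    have hinv_pos : (0:ℝ) < 1/(n:ℝ) := by positivity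
    set s : Set ℝ := {x : ℝ | 1 - 1/(n:ℝ) ≤ F x} with hsdef
    have hne : s.Nonempty := by
      obtain ⟨x, hx⟩ := (hFtop.eventually_const_lt
        (by linarith : 1 - 1/(n:ℝ) < 1)).exists
      exact ⟨x, hx.le⟩
    have hclosed : IsClosed s := by
      have : s = F ⁻¹' Set.Ici (1 - 1/(n:ℝ)) := rfl
      rw [this]
      exact isClosed_Ici.preimage hF_cont
    have hF1U : F 1 = 1 - U 1 := by simp only [hUdef]; ring
    have hlb : ∀ x ∈ s, 1 ≤ x := by
      intro x hx
      by_contra hlt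
      push_neg at hlt
      have h1 : F x ≤ F 1 := hF_mono hlt.le
      have h2 : 1 - 1/(n:ℝ) ≤ F x := hx
      rw [hF1U] at h1
      linarith
    have hbdd : BddBelow s := ⟨1, fun x hx => hlb x hx⟩
    have hmem : sInf s ∈ s := hclosed.csInf_mem hne hbdd
    have han : a n = sInf s := ha n
    have hge : 1 - 1/(n:ℝ) ≤ F (a n) := by rw [han]; exact hmem
    have ha1 : 1 ≤ a n := by rw [han]; exact hlb _ hmem
    have hle : F (a n) ≤ 1 - 1/(n:ℝ) := by
      by_contra hgt
      push_neg at hgt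
      have hev : ∀ᶠ y in nhds (a n), 1 - 1/(n:ℝ) < F y :=
        (hF_cont.continuousAt).eventually_const_lt hgt
      rw [Metric.eventually_nhds_iff] at hev
      obtain ⟨δ, hδ, hball⟩ := hev
      have hy : a n - δ/2 ∈ s := by
        have : 1 - 1/(n:ℝ) < F (a n - δ/2) := by
          apply hball
          rw [Real.dist_eq]
          rw [show a n - δ/2 - a n = -(δ/2) by ring, abs_neg, abs_of_pos (by linarith)]
          linarith
        exact this.le
      have := csInf_le hbdd hy
      rw [← han] at this
      linarith
    refine ⟨ha1, ?_⟩
    have : F (a n) = 1 - 1/(n:ℝ) := le_antisymm hle hge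
    simp only [hUdef]
    linarith
  have ha_top : Tendsto a atTop atTop := by
    rw [tendsto_atTop]
    intro C
    have hUC : 0 < U (max C 1) := hU_pos _ (by positivity)
    filter_upwards [hA_ev,
      tendsto_one_div_atTop_nhds_zero_nat.eventually_lt_const hUC] with n hn h1
    by_contra hlt
    push_neg at hlt
    have h2 : a n ≤ max C 1 := le_trans hlt.le (le_max_left _ _)
    have := hU_anti h2
    rw [hn.2] at this
    linarith
  have hla : Tendsto (fun n : ℕ => Real.log (a n) / Real.log n) atTop (nhds (1/α)) := by
    have h1 := hUlog.comp ha_top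
    have h2 : Tendsto (fun n : ℕ => Real.log n / Real.log (a n)) atTop (nhds α) := by
      have h3 := h1.neg
      rw [neg_neg] at h3
      apply h3.congr'
      filter_upwards [hA_ev, eventually_ge_atTop 1] with n hn hn1
      simp only [Function.comp]
      rw [hn.2, one_div, Real.log_inv]
      ring
    have h4 := h2.inv₀ (ne_of_gt hα)
    rw [show α⁻¹ = 1/α from (one_div α).symm] at h4
    apply h4.congr
    intro n
    rw [inv_div]
  -- f sandwich via MVT
  obtain ⟨x₁, hx₁⟩ := hf_mono
  have hUU : ∀ᶠ t : ℝ in atTop, U (2*t) < U t := by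
    have h1 : ((2:ℝ)^(-α)) < 1 :=
      Real.rpow_lt_one_of_one_lt_of_neg one_lt_two (by linarith)
    filter_upwards [hU2.eventually_lt_const h1, eventually_gt_atTop (0:ℝ)] with t ht ht0
    have := hU_pos t ht0
    rw [div_lt_one this] at ht
    exact ht
  have hfup : ∀ᶠ t : ℝ in atTop,
      0 < f t ∧ (U t - U (2*t))/t ≤ f t ∧ f t ≤ 2 * U (t/2) / t := by
    filter_upwards [hUU, eventually_gt_atTop (0:ℝ), eventually_ge_atTop (2*x₁)]
      with t hUU' ht0 htx
    have hx₁t : x₁ ≤ t/2 := by linarith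
    have hx₁t' : x₁ ≤ t := by linarith
    have hhalf : t/2 < t := by linarith
    have h2t : t < 2*t := by linarith
    obtain ⟨c, hc, hceq⟩ :=
      exists_hasDerivAt_eq_slope F f hhalf hF_cont.continuousOn (fun x _ => hf x)
    obtain ⟨c', hc', hceq'⟩ :=
      exists_hasDerivAt_eq_slope F f h2t hF_cont.continuousOn (fun x _ => hf x)
    have hft_le : f t ≤ 2 * U (t/2) / t := by
      have h1 : f t ≤ f c :=
        hx₁ (Set.mem_Ici.mpr (le_trans hx₁t hc.1.le)) (Set.mem_Ici.mpr hx₁t') hc.2.le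
      rw [hceq] at h1
      have h2 : F t - F (t/2) ≤ U (t/2) := by
        simp only [hUdef]
        linarith [hF1 t]
      have h3 : t - t/2 = t/2 := by ring
      rw [h3] at h1
      calc f t ≤ (F t - F (t/2))/(t/2) := h1
        _ ≤ U (t/2)/(t/2) := by
            apply (div_le_div_iff_of_pos_right (by linarith)).mpr h2
        _ = 2 * U (t/2)/t := by
            field_simp
    have hft_ge : (U t - U (2*t))/t ≤ f t := by
      have h1 : f c' ≤ f t :=
        hx₁ (Set.mem_Ici.mpr hx₁t') (Set.mem_Ici.mpr (le_trans hx₁t' hc'.1.le)) hc'.1.le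
      rw [hceq'] at h1
      have h3 : 2*t - t = t := by ring
      rw [h3] at h1
      have h4 : F (2*t) - F t = U t - U (2*t) := by simp only [hUdef]; ring
      rw [h4] at h1
      exact h1
    have hpos : 0 < f t := lt_of_lt_of_le (div_pos (by linarith) ht0) hft_ge
    exact ⟨hpos, hft_ge, hft_le⟩
  -- limit of log f t / log t
  have hq : Tendsto (fun t => Real.log (f t) / Real.log t) atTop (nhds (-(α+1))) := by
    have hUhalf : Tendsto (fun t => Real.log (U (t/2)) / Real.log t) atTop (nhds (-α)) := by
      have c1 : Tendsto (fun t : ℝ => t/2) atTop atTop :=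
        tendsto_id.atTop_div_const two_pos
      have c2 := hUlog.comp c1
      have c3 : Tendsto (fun t : ℝ => Real.log (t/2) / Real.log t) atTop (nhds 1) := by
        have c4 : Tendsto (fun t : ℝ => 1 - Real.log 2 / Real.log t) atTop (nhds (1 - 0)) :=
          tendsto_const_nhds.sub (tendsto_const_nhds.div_atTop Real.tendsto_log_atTop)
        rw [sub_zero] at c4
        apply c4.congr'
        filter_upwards [eventually_gt_atTop (1:ℝ)] with t ht
        have hlt : Real.log t ≠ 0 := ne_of_gt (Real.log_pos ht)
        rw [Real.log_div (by linarith : t ≠ 0) two_ne_zero]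
        field_simp
      have c5 := c2.mul c3
      rw [mul_one] at c5
      apply c5.congr'
      filter_upwards [eventually_gt_atTop (2:ℝ)] with t ht
      simp only [Function.comp]
      have h1 : Real.log (t/2) ≠ 0 := ne_of_gt (Real.log_pos (by linarith))
      have h2 : Real.log t ≠ 0 := ne_of_gt (Real.log_pos (by linarith))
      field_simp
    have hrp1 : (0:ℝ) < 1 - (2:ℝ)^(-α) := by
      have := Real.rpow_lt_one_of_one_lt_of_neg one_lt_two (by linarith : -α < 0)
      linarith
    have hratio_log : Tendsto (fun t => Real.log (1 - U (2*t)/U t)) atTop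
        (nhds (Real.log (1 - (2:ℝ)^(-α)))) :=
      ((Real.continuousAt_log (ne_of_gt hrp1)).tendsto).comp (tendsto_const_nhds.sub hU2)
    have hlo : Tendsto (fun t => Real.log (U t)/Real.log t
        + Real.log (1 - U (2*t)/U t)/Real.log t - 1) atTop (nhds (-(α+1))) := by
      have := (hUlog.add (hratio_log.div_atTop Real.tendsto_log_atTop)).sub
        (tendsto_const_nhds (x := (1:ℝ)))
      rw [show -α + 0 - 1 = -(α+1) by ring] at this
      exact this
    have hhi : Tendsto (fun t => Real.log 2/Real.log t
        + Real.log (U (t/2))/Real.log t - 1) atTop (nhds (-(α+1))) := by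
      have := (((tendsto_const_nhds (x := Real.log 2)).div_atTop
        Real.tendsto_log_atTop).add hUhalf).sub (tendsto_const_nhds (x := (1:ℝ)))
      rw [show (0:ℝ) + -α - 1 = -(α+1) by ring] at this
      exact this
    apply tendsto_of_tendsto_of_tendsto_of_le_of_le' hlo hhi
    · -- lower bound
      filter_upwards [hfup, hUU, eventually_gt_atTop (1:ℝ)] with t hft hUU' ht1
      have ht0 : (0:ℝ) < t := by linarith
      have hlt : (0:ℝ) < Real.log t := Real.log_pos ht1
      have hUt : 0 < U t := hU_pos t ht0
      have hd : 0 < U t - U (2*t) := by linarith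
      have key : Real.log (U t) + Real.log (1 - U (2*t)/U t) - Real.log t ≤ Real.log (f t) := by
        have h1 : Real.log ((U t - U (2*t))/t) ≤ Real.log (f t) :=
          Real.log_le_log (div_pos hd ht0) hft.2.1
        have h2 : U t - U (2*t) = U t * (1 - U (2*t)/U t) := by
          field_simp
        rw [Real.log_div (by linarith : U t - U (2*t) ≠ 0) (by linarith : t ≠ 0), h2,
          Real.log_mul (ne_of_gt hUt) ?hne] at h1
        · exact h1
        case hne =>
          have : 0 < 1 - U (2*t)/U t := by
            rw [sub_pos, div_lt_one hUt]
            exact hUU'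
          exact ne_of_gt this
      have := (div_le_div_iff_of_pos_right hlt).mpr key
      rw [sub_div, add_div, div_self (ne_of_gt hlt)] at this
      exact this
    · -- upper bound
      filter_upwards [hfup, eventually_gt_atTop (1:ℝ)] with t hft ht1
      have ht0 : (0:ℝ) < t := by linarith
      have hlt : (0:ℝ) < Real.log t := Real.log_pos ht1
      have hUt2 : 0 < U (t/2) := hU_pos _ (by linarith)
      have key : Real.log (f t) ≤ Real.log 2 + Real.log (U (t/2)) - Real.log t := by
        have h1 : Real.log (f t) ≤ Real.log (2 * U (t/2)/t) :=
          Real.log_le_log hft.1 hft.2.2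
        rw [Real.log_div (by positivity) (by linarith : t ≠ 0),
          Real.log_mul two_ne_zero (ne_of_gt hUt2)] at h1
        exact h1
      have := (div_le_div_iff_of_pos_right hlt).mpr key
      rw [sub_div, add_div, div_self (ne_of_gt hlt)] at this
      exact this
  -- log log term
  have hlogn_top : Tendsto (fun n : ℕ => Real.log (n:ℝ)) atTop atTop :=
    Real.tendsto_log_atTop.comp tendsto_natCast_atTop_atTop
  have hloglog : Tendsto (fun n : ℕ => Real.log (Real.log (n:ℝ) / α) / Real.log (n:ℝ))
      atTop (nhds 0) := by
    have h1 : Tendsto (fun y : ℝ => Real.log y / y) atTop (nhds 0) :=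
      Real.isLittleO_log_id_atTop.tendsto_div_nhds_zero
    have h2 := h1.comp hlogn_top
    have h3 : Tendsto (fun n : ℕ => Real.log α / Real.log (n:ℝ)) atTop (nhds 0) :=
      tendsto_const_nhds.div_atTop hlogn_top
    have h4 := h2.sub h3
    rw [sub_zero] at h4
    apply h4.congr'
    filter_upwards [hlogn_top.eventually_gt_atTop 0] with n hn
    simp only [Function.comp]
    rw [Real.log_div (ne_of_gt hn) (ne_of_gt hα), sub_div]
  -- final assembly
  rw [Metric.tendstoUniformlyOn_iff]
  intro ε hε
  have hlogM : 0 ≤ Real.log M := Real.log_nonneg hM.le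
  set K : ℝ := 1/α + 1 + Real.log M / α with hKdef
  have hK : 0 < K := by positivity
  set ε₁ : ℝ := ε/(4*K) with hε₁def
  set ε₂ : ℝ := min 1 (ε/(4*(α+2))) with hε₂def
  set ε₄ : ℝ := ε/(8*(Real.log M + 1)) with hε₄def
  have hε₁ : 0 < ε₁ := by positivity
  have hε₂ : 0 < ε₂ := lt_min one_pos (by positivity)
  have hε₄ : 0 < ε₄ := by positivity
  -- eventual f bound
  have hqe : ∀ᶠ t : ℝ in atTop,
      0 < f t ∧ |Real.log (f t)/Real.log t + (α+1)| < ε₁ := by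
    have h := hq
    rw [Metric.tendsto_nhds] at h
    filter_upwards [h ε₁ hε₁, hfup] with t ht ht2
    refine ⟨ht2.1, ?_⟩
    rw [Real.dist_eq] at ht
    convert ht using 2
    ring
  rw [eventually_atTop] at hqe
  obtain ⟨T₀, hT₀⟩ := hqe
  have hla_ev : ∀ᶠ n : ℕ in atTop, |Real.log (a n)/Real.log (n:ℝ) - 1/α| < ε₂ := by
    have h := hla
    rw [Metric.tendsto_nhds] at h
    filter_upwards [h ε₂ hε₂] with n hn
    rw [Real.dist_eq] at hn
    exact hn
  have hlr_ev : ∀ᶠ n : ℕ in atTop,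
      |Real.log (Real.log (n:ℝ)/α)/Real.log (n:ℝ)| < ε/8 := by
    have h := hloglog
    rw [Metric.tendsto_nhds] at h
    filter_upwards [h (ε/8) (by positivity)] with n hn
    rw [Real.dist_eq, sub_zero] at hn
    exact hn
  filter_upwards [hA_ev, ha_top.eventually_ge_atTop (max T₀ 2), hla_ev, hlr_ev,
    hlogn_top.eventually_gt_atTop (1/ε₄), eventually_ge_atTop 2] with n hAn haT hla' hlr' hlnb hn2
  intro x hx
  obtain ⟨hx1, hxM⟩ := hx
  -- basic positivity
  have hn0 : (2:ℝ) ≤ (n:ℝ) := by exact_mod_cast hn2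
  have hln : 0 < Real.log (n:ℝ) := lt_trans (by positivity) hlnb
  have hlninv : 1/Real.log (n:ℝ) < ε₄ := by
    rw [div_lt_iff₀ hln, ← div_lt_iff₀' hε₄]
    exact hlnb
  have hx0 : (0:ℝ) < x := by linarith
  have hlx0 : 0 ≤ Real.log x := Real.log_nonneg hx1
  have hlxM : Real.log x ≤ Real.log M := Real.log_le_log hx0 hxM
  have han1 : 1 ≤ a n := hAn.1
  have han0 : 0 < a n := by linarith
  have hr : 0 < Real.log (n:ℝ)/α := by positivity
  have hxr : 1 ≤ x ^ (Real.log (n:ℝ)/α) := Real.one_le_rpow hx1 hr.le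
  have hxrpos : 0 < x ^ (Real.log (n:ℝ)/α) := Real.rpow_pos_of_pos hx0 _
  set t : ℝ := a n * x ^ (Real.log (n:ℝ)/α) with htdef
  have ht_an : a n ≤ t := le_mul_of_one_le_right han0.le hxr
  have ht2 : 2 ≤ t := le_trans (le_trans (le_max_right T₀ 2) haT) ht_an
  have ht0 : 0 < t := by linarith
  have hltpos : 0 < Real.log t := Real.log_pos (by linarith)
  have hqt := hT₀ t (le_trans (le_trans (le_max_left T₀ 2) haT) ht_an)
  have hft_pos : 0 < f t := hqt.1
  -- facts about F t
  have hFan : F (a n) = 1 - 1/(n:ℝ) := by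
    have := hAn.2
    simp only [hUdef] at this
    linarith
  have hFt : 1 - 1/(n:ℝ) ≤ F t := hFan ▸ hF_mono ht_an
  have hinv_le : 1/(n:ℝ) ≤ 1/2 := by
    apply one_div_le_one_div_of_le <;> linarith
  have hFtpos : 0 < F t := by linarith
  have hn1 : (1:ℝ) ≤ (n:ℝ) - 1 := by linarith
  have hlF_le : Real.log (F t) ≤ 0 := Real.log_nonpos hFtpos.le (hF1 t)
  have hlF_ge : -(1/((n:ℝ)-1)) ≤ Real.log (F t) := by
    have hy : (0:ℝ) < (n:ℝ)/((n:ℝ)-1) := by positivity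
    have h1 : Real.log ((n:ℝ)/((n:ℝ)-1)) ≤ (n:ℝ)/((n:ℝ)-1) - 1 :=
      Real.log_le_sub_one_of_pos hy
    have h2 : (n:ℝ)/((n:ℝ)-1) - 1 = 1/((n:ℝ)-1) := by
      field_simp
      ring
    have h3 : 1 - 1/(n:ℝ) = ((n:ℝ)/((n:ℝ)-1))⁻¹ := by
      rw [inv_div]
      field_simp
    have h4 : Real.log (1 - 1/(n:ℝ)) ≤ Real.log (F t) :=
      Real.log_le_log (by linarith) hFt
    rw [h3, Real.log_inv] at h4
    linarith
  -- expansion of log g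
  have hlog_t : Real.log t = Real.log (a n) + (Real.log (n:ℝ)/α) * Real.log x := by
    rw [htdef, Real.log_mul han0.ne' hxrpos.ne', Real.log_rpow hx0]
  have hlog_g : Real.log (g n x) = Real.log (n:ℝ) + Real.log (a n)
      + Real.log (Real.log (n:ℝ)/α) + (Real.log (n:ℝ)/α - 1) * Real.log x
      + ((n:ℝ) - 1) * Real.log (F t) + Real.log (f t) := by
    have p1 : (0:ℝ) < (n:ℝ) := by linarith
    have p3 : (0:ℝ) < Real.log (n:ℝ)/α := hr
    have p4 : (0:ℝ) < x ^ (Real.log (n:ℝ)/α - 1) := Real.rpow_pos_of_pos hx0 _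
    have p5 : (0:ℝ) < F t ^ (n-1) := pow_pos hFtpos _
    have hcast : ((n-1 : ℕ):ℝ) = (n:ℝ) - 1 := by
      have : 1 ≤ n := le_trans (by norm_num) hn2
      push_cast [Nat.cast_sub this]
      ring
    rw [hg n x hx1]
    rw [Real.log_mul (by positivity) hft_pos.ne',
      Real.log_mul (by positivity) p5.ne',
      Real.log_mul (by positivity) p4.ne',
      Real.log_mul (by positivity) p3.ne',
      Real.log_mul p1.ne' han0.ne',
      Real.log_rpow hx0, Real.log_pow, hcast]
  -- the key identity
  have hltne : Real.log t ≠ 0 := hltpos.ne'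
  have hlnne : Real.log (n:ℝ) ≠ 0 := hln.ne'
  have hiden : Real.log (g n x) / Real.log (n:ℝ) + Real.log x
      = (Real.log (a n)/Real.log (n:ℝ) - 1/α)
      + Real.log (Real.log (n:ℝ)/α)/Real.log (n:ℝ)
      + (-(Real.log x/Real.log (n:ℝ)))
      + ((n:ℝ)-1)*Real.log (F t)/Real.log (n:ℝ)
      + ((Real.log (f t)/Real.log t) + (α+1))
          * (Real.log (a n)/Real.log (n:ℝ) + Real.log x/α)
      + (α+1)*(1/α - Real.log (a n)/Real.log (n:ℝ)) := by
    set q' := Real.log (f t)/Real.log t with hq'def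
    have hlf : Real.log (f t) = q' * Real.log t := (div_mul_cancel₀ _ hltne).symm
    rw [hlog_g, hlf, hlog_t]
    generalize Real.log (Real.log (n:ℝ)/α) = w
    generalize Real.log (a n) = la'
    generalize Real.log x = lx'
    generalize Real.log (F t) = lF'
    field_simp
    ring
  -- bound each term
  rw [Real.dist_eq]
  have habs : |-Real.log x - Real.log (g n x)/Real.log (n:ℝ)|
      = |Real.log (g n x)/Real.log (n:ℝ) + Real.log x| := by
    rw [show -Real.log x - Real.log (g n x)/Real.log (n:ℝ)
      = -(Real.log (g n x)/Real.log (n:ℝ) + Real.log x) by ring, abs_neg]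
  rw [habs, hiden]
  have h1 : |Real.log (a n)/Real.log (n:ℝ) - 1/α| < ε₂ := hla'
  have h2 : |Real.log (Real.log (n:ℝ)/α)/Real.log (n:ℝ)| < ε/8 := hlr'
  have h3 : |(-(Real.log x/Real.log (n:ℝ)))| ≤ Real.log M * ε₄ := by
    rw [abs_neg, abs_of_nonneg (by positivity)]
    calc Real.log x/Real.log (n:ℝ) = Real.log x * (1/Real.log (n:ℝ)) := by ring
      _ ≤ Real.log M * ε₄ := by
          apply mul_le_mul hlxM hlninv.le (by positivity) hlogM
  have h4 : |((n:ℝ)-1)*Real.log (F t)/Real.log (n:ℝ)| ≤ ε₄ := by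
    rw [abs_div, abs_mul, abs_of_pos hln, abs_of_pos (by linarith : (0:ℝ) < (n:ℝ)-1)]
    have hlFabs : |Real.log (F t)| ≤ 1/((n:ℝ)-1) := by
      rw [abs_le]
      constructor
      · exact hlF_ge
      · calc Real.log (F t) ≤ 0 := hlF_le
          _ ≤ 1/((n:ℝ)-1) := by positivity
    have : ((n:ℝ)-1) * |Real.log (F t)| ≤ 1 := by
      calc ((n:ℝ)-1) * |Real.log (F t)| ≤ ((n:ℝ)-1) * (1/((n:ℝ)-1)) :=
          mul_le_mul_of_nonneg_left hlFabs (by linarith)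
        _ = 1 := by field_simp
    calc ((n:ℝ)-1) * |Real.log (F t)| / Real.log (n:ℝ)
        ≤ 1 / Real.log (n:ℝ) := by
          apply (div_le_div_iff_of_pos_right hln).mpr this
      _ ≤ ε₄ := hlninv.le
  have h5 : |((Real.log (f t)/Real.log t) + (α+1))
      * (Real.log (a n)/Real.log (n:ℝ) + Real.log x/α)| ≤ ε₁ * K := by
    rw [abs_mul]
    apply mul_le_mul hqt.2.le ?_ (abs_nonneg _) hε₁.le
    have hs1 : |Real.log (a n)/Real.log (n:ℝ)| ≤ 1/α + 1 := by
      calc |Real.log (a n)/Real.log (n:ℝ)|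
          ≤ |Real.log (a n)/Real.log (n:ℝ) - 1/α| + |1/α| := by
            have := abs_add_le (Real.log (a n)/Real.log (n:ℝ) - 1/α) (1/α)
            simpa using this
        _ ≤ 1/α + 1 := by
            rw [abs_of_pos (by positivity : (0:ℝ) < 1/α)]
            have : ε₂ ≤ 1 := min_le_left _ _
            linarith [h1.le]
    calc |Real.log (a n)/Real.log (n:ℝ) + Real.log x/α|
        ≤ |Real.log (a n)/Real.log (n:ℝ)| + |Real.log x/α| := abs_add_le _ _
      _ ≤ (1/α + 1) + Real.log M/α := by
          apply add_le_add hs1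
          rw [abs_of_nonneg (by positivity)]
          exact (div_le_div_iff_of_pos_right hα).mpr hlxM
      _ = K := by rw [hKdef]; try ring
  have h6 : |(α+1)*(1/α - Real.log (a n)/Real.log (n:ℝ))| ≤ (α+1)*ε₂ := by
    rw [abs_mul, abs_of_pos (by linarith : (0:ℝ) < α+1), abs_sub_comm]
    exact mul_le_mul_of_nonneg_left hla'.le (by linarith)
  have habs6 : ∀ y1 y2 y3 y4 y5 y6 : ℝ,
      |y1+y2+y3+y4+y5+y6| ≤ |y1|+|y2|+|y3|+|y4|+|y5|+|y6| := by
    intro y1 y2 y3 y4 y5 y6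
    calc |y1+y2+y3+y4+y5+y6| ≤ |y1+y2+y3+y4+y5| + |y6| := abs_add_le _ _
      _ ≤ (|y1+y2+y3+y4| + |y5|) + |y6| := by gcongr; exact abs_add_le _ _
      _ ≤ ((|y1+y2+y3| + |y4|) + |y5|) + |y6| :=
          by gcongr; exact abs_add_le _ _
      _ ≤ (((|y1+y2| + |y3|) + |y4|) + |y5|) + |y6| :=
          by gcongr; exact abs_add_le _ _
      _ ≤ ((((|y1| + |y2|) + |y3|) + |y4|) + |y5|) + |y6| :=
          by gcongr; exact abs_add_le _ _
      _ = |y1|+|y2|+|y3|+|y4|+|y5|+|y6| := by ring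
  have e1 : ε₁ * K = ε/4 := by
    rw [hε₁def]
    field_simp
  have e2 : Real.log M * ε₄ + ε₄ = ε/8 := by
    rw [hε₄def]
    have : Real.log M + 1 ≠ 0 := by positivity
    field_simp
  have e3 : ε₂ + (α+1)*ε₂ ≤ ε/4 := by
    have h := min_le_right 1 (ε/(4*(α+2)))
    have h2 : ε₂ ≤ ε/(4*(α+2)) := h
    have h3 : (0:ℝ) < α + 2 := by linarith
    have h4 : ε₂ * (4*(α+2)) ≤ ε := by
      rw [← le_div_iff₀ (by positivity)]
      exact h2
    have h5 : ε₂ + (α+1)*ε₂ = ε₂*(4*(α+2))/4 := by ring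
    linarith
  have hfin : ∀ y1 y2 y3 y4 y5 y6 : ℝ, |y1| < ε₂ → |y2| < ε/8 →
      |y3| ≤ Real.log M * ε₄ → |y4| ≤ ε₄ → |y5| ≤ ε₁*K → |y6| ≤ (α+1)*ε₂ →
      |y1+y2+y3+y4+y5+y6| < ε := by
    intro y1 y2 y3 y4 y5 y6 b1 b2 b3 b4 b5 b6
    have hb := habs6 y1 y2 y3 y4 y5 y6
    clear_value K ε₁ ε₂ ε₄
    linarith [e1, e2, e3]
  exact hfin _ _ _ _ _ _ h1 h2 h3 h4 h5 h6
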